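/- arXiv:2410.08904 — 2 statements merged into one kernel-verified Lean document; each statement's English description precedes it below -/
import Mathlib

section
/- Exterior lattice resolvent sum bound (key estimate in the proof of Lemma 5.2): There exists a constant C > 0 such that for every k_F ∈ (0,1] and every L ≥ 1/k_F, one has (1/L³) ∑_{k ∈ Λ*_L, k_F + k_F^{3/2} ≤ |k| ≤ 3 k_F} 1/(|k|² − k_F²) ≤ C k_F^{1/2}. (With ρ := k_F³ this is the bound C ρ^{1/6} used in the paper.) -/
/-!
Exterior lattice resolvent sum bound (key estimate in the proof of Lemma 5.2):
there is `C > 0` such that for every `k_F ∈ (0,1]` and every `L ≥ 1/k_F`,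
`(1/L³) ∑_{k ∈ Λ*_L, k_F + k_F^{3/2} ≤ |k| ≤ 3 k_F} 1/(|k|² − k_F²) ≤ C k_F^{1/2}`,
where `Λ*_L = (2π/L)ℤ³`.
-/

noncomputable section

open Real

abbrev E3 : Type := EuclideanSpace ℝ (Fin 3)

/-- The momentum lattice point `(2π/L)·n` of `Λ*_L`, for `n ∈ ℤ³`. -/
def momVec (L : ℝ) (n : Fin 3 → ℤ) : E3 :=
  ∑ j : Fin 3, (2 * π / L * (n j : ℝ)) • EuclideanSpace.single j (1 : ℝ)

/-- The Euclidean norm `|k|` of the lattice point `(2π/L)·n`. -/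
def knorm (L : ℝ) (n : Fin 3 → ℤ) : ℝ := ‖momVec L n‖

lemma momVec_apply (L : ℝ) (n : Fin 3 → ℤ) (i : Fin 3) :
    momVec L n i = 2 * π / L * (n i : ℝ) := by
  show (∑ j : Fin 3, (2 * π / L * (n j : ℝ)) • EuclideanSpace.single j (1 : ℝ)) i = _
  rw [WithLp.ofLp_sum, Finset.sum_apply]
  simp [EuclideanSpace.single_apply]

lemma knorm_sq (L : ℝ) (n : Fin 3 → ℤ) :
    knorm L n ^ 2 = ∑ i : Fin 3, (2 * π / L * (n i : ℝ)) ^ 2 := by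
  rw [knorm, EuclideanSpace.norm_eq, Real.sq_sqrt (by positivity)]
  simp only [momVec_apply, Real.norm_eq_abs, sq_abs]

lemma coord_le_knorm (L : ℝ) (n : Fin 3 → ℤ) (i : Fin 3) :
    |2 * π / L * (n i : ℝ)| ≤ knorm L n := by
  have h1 : (2 * π / L * (n i : ℝ)) ^ 2 ≤ knorm L n ^ 2 := by
    rw [knorm_sq]
    exact Finset.single_le_sum (f := fun j => (2 * π / L * (n j : ℝ)) ^ 2) (fun j _ => sq_nonneg _) (Finset.mem_univ i)
  calc |2 * π / L * (n i : ℝ)| = Real.sqrt ((2 * π / L * (n i : ℝ)) ^ 2) :=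
        (Real.sqrt_sq_eq_abs _).symm
    _ ≤ Real.sqrt (knorm L n ^ 2) := Real.sqrt_le_sqrt h1
    _ = knorm L n := Real.sqrt_sq (norm_nonneg _)

theorem exterior_lattice_resolvent_sum_bound :
    ∃ C : ℝ, 0 < C ∧
      ∀ kF : ℝ, kF ∈ Set.Ioc (0 : ℝ) 1 → ∀ L : ℝ, 1 / kF ≤ L →
        (1 / L ^ 3) *
            ∑' n : Fin 3 → ℤ,
              (if kF + kF ^ ((3 : ℝ) / 2) ≤ knorm L n ∧ knorm L n ≤ 3 * kF then
                1 / (knorm L n ^ 2 - kF ^ 2)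
              else 0)
          ≤ C * kF ^ ((1 : ℝ) / 2) := by
  refine ⟨63, by norm_num, ?_⟩
  rintro kF ⟨hkF, hkF1⟩ L hL
  have hπ := Real.pi_gt_three
  have hπ4 := Real.pi_le_four
  have hL0 : 0 < L := lt_of_lt_of_le (by positivity) hL
  have hkFL : 1 ≤ kF * L := by
    have := (div_le_iff₀ hkF).mp hL
    nlinarith
  set x : ℝ := 3 * kF * L / (2 * π) with hx
  have hx_pos : 0 < x := by positivity
  set N : ℤ := ⌈x⌉ with hN
  have hNx : (N : ℝ) < x + 1 := Int.ceil_lt_add_one x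
  have hxN : x ≤ (N : ℝ) := Int.le_ceil x
  have hN0 : 0 ≤ N := by
    have : (0:ℤ) < N := Int.ceil_pos.mpr hx_pos
    omega
  have hx2 : x * (2 * π) = 3 * (kF * L) := by
    rw [hx]; field_simp
  set f : (Fin 3 → ℤ) → ℝ := fun n =>
    if kF + kF ^ ((3 : ℝ) / 2) ≤ knorm L n ∧ knorm L n ≤ 3 * kF then
      1 / (knorm L n ^ 2 - kF ^ 2)
    else 0 with hf
  set F : Finset (Fin 3 → ℤ) := Finset.Icc (fun _ => -N) (fun _ => N) with hF
  -- support
  have hsupp : ∀ n ∉ F, f n = 0 := by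
    intro n hn
    simp only [hf]
    rw [if_neg]
    rintro ⟨-, h2⟩
    rw [hF, Finset.mem_Icc] at hn
    have hex : ∃ i, N + 1 ≤ |n i| := by
      by_contra hc
      push_neg at hc
      refine hn ⟨fun i => ?_, fun i => ?_⟩
      · have h := abs_lt.mp (hc i)
        show -N ≤ n i
        omega
      · have h := abs_lt.mp (hc i)
        show n i ≤ N
        omega
    obtain ⟨i, hi⟩ := hex
    have hni : x < |(n i : ℝ)| := by
      have : ((N : ℝ) + 1) ≤ |(n i : ℝ)| := by
        rw [← Int.cast_abs]
        exact_mod_cast hi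
      linarith
    have hcoord := coord_le_knorm L n i
    rw [abs_mul, abs_of_pos (by positivity : (0:ℝ) < 2 * π / L)] at hcoord
    have hgt : 3 * kF < 2 * π / L * |(n i : ℝ)| := by
      have h1 : 2 * π / L * x < 2 * π / L * |(n i : ℝ)| :=
        mul_lt_mul_of_pos_left hni (by positivity)
      have h2 : 2 * π / L * x = 3 * kF := by
        rw [hx]; field_simp
      linarith
    linarith
  rw [tsum_eq_sum hsupp]
  -- term bound
  set b : ℝ := 1 / (2 * kF ^ ((5 : ℝ) / 2)) with hb
  have hbpos : 0 < b := by rw [hb]; positivity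
  have hterm : ∀ n ∈ F, f n ≤ b := by
    intro n _
    simp only [hf]
    split_ifs with h
    · obtain ⟨h1, h2⟩ := h
      have ha : 0 < kF ^ ((3:ℝ)/2) := Real.rpow_pos_of_pos hkF _
      have h52 : kF ^ ((5:ℝ)/2) = kF ^ ((3:ℝ)/2) * kF := by
        rw [show (5:ℝ)/2 = 3/2 + 1 by norm_num, Real.rpow_add hkF, Real.rpow_one]
      have hsq : (kF + kF ^ ((3:ℝ)/2)) ^ 2 ≤ knorm L n ^ 2 :=
        pow_le_pow_left₀ (by positivity) h1 2
      have hden : 2 * kF ^ ((5:ℝ)/2) ≤ knorm L n ^ 2 - kF ^ 2 := by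
        rw [h52]; nlinarith [sq_nonneg (kF ^ ((3:ℝ)/2))]
      exact one_div_le_one_div_of_le (by positivity) hden
    · exact hbpos.le
  have hsum : ∑ n ∈ F, f n ≤ (F.card : ℝ) * b := by
    have := Finset.sum_le_card_nsmul F f b hterm
    rwa [nsmul_eq_mul] at this
  -- cardinality bound
  have hcard : (F.card : ℝ) ≤ (5 * (kF * L)) ^ 3 := by
    have h1 : F.card = ((2 * N + 1).toNat) ^ 3 := by
      rw [hF, Pi.card_Icc]
      simp [Int.card_Icc]
      congr 1
      omega
    rw [h1]
    push_cast
    have h2 : (((2 * N + 1).toNat : ℤ) : ℝ) = 2 * (N : ℝ) + 1 := by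
      rw [Int.toNat_of_nonneg (by omega)]
      push_cast; ring
    have h3 : 2 * (N : ℝ) + 1 ≤ 5 * (kF * L) := by
      nlinarith [mul_pos (sub_pos.mpr hπ) hx_pos, hx2, hNx, hkFL]
    calc (((2 * N + 1).toNat : ℕ) : ℝ) ^ 3 = (2 * (N:ℝ) + 1) ^ 3 := by
          rw [← h2]; norm_cast
      _ ≤ (5 * (kF * L)) ^ 3 := by
          apply pow_le_pow_left₀ (by positivity) h3
  -- put it together
  have hS : ∑ n ∈ F, f n ≤ (5 * (kF * L)) ^ 3 * b :=
    hsum.trans (mul_le_mul_of_nonneg_right hcard hbpos.le)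
  have hfinal : (1 / L ^ 3) * ((5 * (kF * L)) ^ 3 * b) ≤ 63 * kF ^ ((1:ℝ)/2) := by
    have hLne : L ≠ 0 := hL0.ne'
    have heq : (1 / L ^ 3) * ((5 * (kF * L)) ^ 3 * b) = 125 * kF ^ 3 * b := by
      field_simp
      ring
    rw [heq, hb]
    have hk3 : kF ^ 3 = kF ^ ((5:ℝ)/2) * kF ^ ((1:ℝ)/2) := by
      rw [← Real.rpow_add hkF, ← Real.rpow_natCast kF 3]
      norm_num
    rw [hk3]
    have h52 : 0 < kF ^ ((5:ℝ)/2) := Real.rpow_pos_of_pos hkF _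
    have h12 : 0 ≤ kF ^ ((1:ℝ)/2) := (Real.rpow_pos_of_pos hkF _).le
    have hrw : 125 * (kF ^ ((5:ℝ)/2) * kF ^ ((1:ℝ)/2)) * (1 / (2 * kF ^ ((5:ℝ)/2)))
        = (125 / 2) * kF ^ ((1:ℝ)/2) := by
      field_simp
    rw [hrw]
    exact mul_le_mul_of_nonneg_right (by norm_num) h12
  refine le_trans ?_ hfinal
  exact mul_le_mul_of_nonneg_left hS (by positivity)
end
end

section
/- Uniform boundedness of the Huang–Yang-type momentum integral (estimate of the term II_{a;4} in Proposition 5.3): There exists a constant C > 0 such that for every κ ∈ (0,1], ∫_{ℝ³} dp ∫_{{r ∈ ℝ³ : |r| < 1 < |r+p| ≤ 3}} dr ∫_{{r' ∈ ℝ³ : |r'| < κ < |r'−p| ≤ 3κ}} dr' · 1/(|r+p|² − |r|² + |r'−p|² − |r'|²) ≤ C. (On the domain of integration the denominator is strictly positive.) -/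
/-!
Uniform boundedness of the Huang–Yang-type momentum integral (estimate of the
term II_{a;4} in Proposition 5.3): there is `C > 0` such that for every
`κ ∈ (0,1]`,
`∫_{ℝ³} dp ∫_{|r|<1<|r+p|≤3} dr ∫_{|r'|<κ<|r'−p|≤3κ} dr'
  1/(|r+p|² − |r|² + |r'−p|² − |r'|²) ≤ C`.
-/

noncomputable section

open MeasureTheory

/-- The Huang–Yang momentum-integral domain, for the ratio `κ = k_F^↓/k_F^↑`:
the set of triples `(p, r, r')` with `|r| < 1 < |r+p| ≤ 3` and
`|r'| < κ < |r'−p| ≤ 3κ`. -/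
def HYdomain (κ : ℝ) : Set (E3 × E3 × E3) :=
  {z | ‖z.2.1‖ < 1 ∧ 1 < ‖z.2.1 + z.1‖ ∧ ‖z.2.1 + z.1‖ ≤ 3 ∧
       ‖z.2.2‖ < κ ∧ κ < ‖z.2.2 - z.1‖ ∧ ‖z.2.2 - z.1‖ ≤ 3 * κ}

namespace HYaux

open Set Metric
open scoped ENNReal NNReal

/-! ### A polar-coordinate formula for lower integrals of radial functions on `E3`. -/

lemma lintegral_norm_radial (g : ℝ → ℝ≥0∞) (hg : Measurable g) :
    ∫⁻ (x : E3), g ‖x‖ =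
      (volume : Measure E3).toSphere Set.univ *
        ∫⁻ r in Set.Ioi (0:ℝ), ENNReal.ofReal (r ^ 2) * g r := by
  have hdim : Module.finrank ℝ E3 = 3 := by simp [finrank_euclideanSpace]
  have hsnd : Measurable fun (y : sphere (0:E3) 1 × Ioi (0:ℝ)) => g ↑y.2 :=
    hg.comp (measurable_subtype_coe.comp measurable_snd)
  have h1 : ∫⁻ (x : E3), g ‖x‖ = ∫⁻ x in ({0}ᶜ : Set E3), g ‖x‖ := by
    rw [MeasureTheory.restrict_compl_singleton]
  have h2 : ∫⁻ x in ({0}ᶜ : Set E3), g ‖x‖ =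
      ∫⁻ (x : ({0}ᶜ : Set E3)), g ‖(x : E3)‖ ∂((volume : Measure E3).comap (↑)) :=
    (lintegral_subtype_comap (measurableSet_singleton (0:E3)).compl fun x => g ‖x‖).symm
  have hmp := (volume : Measure E3).measurePreserving_homeomorphUnitSphereProd
  have h3 : ∫⁻ (x : ({0}ᶜ : Set E3)), g ‖(x : E3)‖ ∂((volume : Measure E3).comap (↑)) =
      ∫⁻ (y : sphere (0:E3) 1 × Ioi (0:ℝ)), g y.2
        ∂((volume : Measure E3).toSphere.prod (.volumeIoiPow (Module.finrank ℝ E3 - 1))) := by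
    rw [← hmp.lintegral_comp (f := fun y : sphere (0:E3) 1 × Ioi (0:ℝ) => g y.2) hsnd]
    simp
  have h4 : ∫⁻ (y : sphere (0:E3) 1 × Ioi (0:ℝ)), g y.2
        ∂((volume : Measure E3).toSphere.prod (.volumeIoiPow (Module.finrank ℝ E3 - 1))) =
      (volume : Measure E3).toSphere Set.univ *
        ∫⁻ (r : Ioi (0:ℝ)), g r ∂(Measure.volumeIoiPow 2) := by
    rw [lintegral_prod (fun y : sphere (0:E3) 1 × Ioi (0:ℝ) => g ↑y.2) hsnd.aemeasurable, hdim]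
    simp [lintegral_const, mul_comm]
  have h5 : ∫⁻ (r : Ioi (0:ℝ)), g r ∂(Measure.volumeIoiPow 2) =
      ∫⁻ r in Set.Ioi (0:ℝ), ENNReal.ofReal (r ^ 2) * g r := by
    rw [Measure.volumeIoiPow,
      lintegral_withDensity_eq_lintegral_mul _
        ((measurable_subtype_coe.pow_const 2).ennreal_ofReal)
        (show Measurable fun r : Ioi (0:ℝ) => g ↑r from hg.comp measurable_subtype_coe)]
    exact lintegral_subtype_comap measurableSet_Ioi
      (fun r => ENNReal.ofReal (r ^ 2) * g r)
  rw [h1, h2, h3, h4, h5]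

/-! ### One-dimensional integrability of the inverse square-root singularity. -/

lemma aux_1d (a b c : ℝ) (hab : a < b) :
    ∫⁻ x in Set.Ioc a b, ENNReal.ofReal (c / Real.sqrt (x - a)) < ∞ := by
  have h0 : IntervalIntegrable (fun x : ℝ => c * x ^ (-(1/2) : ℝ)) volume 0 (b - a) :=
    (intervalIntegral.intervalIntegrable_rpow' (by norm_num)).const_mul c
  have h1 : IntervalIntegrable (fun x : ℝ => c * (x - a) ^ (-(1/2) : ℝ)) volume a b := by
    have := h0.comp_sub_right a
    simpa using this
  have h2 : IntegrableOn (fun x : ℝ => c * (x - a) ^ (-(1/2) : ℝ)) (Set.Ioc a b) volume := by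
    rwa [intervalIntegrable_iff_integrableOn_Ioc_of_le hab.le] at h1
  have h3 := h2.lintegral_lt_top
  refine lt_of_le_of_lt (le_of_eq ?_) h3
  refine setLIntegral_congr_fun measurableSet_Ioc ?_
  intro x hx
  dsimp only
  congr 1
  have hxa : 0 < x - a := sub_pos.2 hx.1
  rw [Real.rpow_neg hxa.le, Real.sqrt_eq_rpow, div_eq_mul_inv]

lemma aux_1d' (a b c : ℝ) (hab : a < b) :
    ∫⁻ x in Set.Ioo a b, ENNReal.ofReal (c / Real.sqrt (b - x)) < ∞ := by
  have h0 : IntervalIntegrable (fun x : ℝ => c * x ^ (-(1/2) : ℝ)) volume 0 (b - a) :=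
    (intervalIntegral.intervalIntegrable_rpow' (by norm_num)).const_mul c
  have h1 : IntervalIntegrable (fun x : ℝ => c * (b - x) ^ (-(1/2) : ℝ)) volume a b := by
    have h := (h0.comp_sub_left b).symm
    simpa using h
  have h2 : IntegrableOn (fun x : ℝ => c * (b - x) ^ (-(1/2) : ℝ)) (Set.Ioo a b) volume :=
    ((intervalIntegrable_iff_integrableOn_Ioc_of_le hab.le).1 h1).mono_set Set.Ioo_subset_Ioc_self
  have h3 := h2.lintegral_lt_top
  refine lt_of_le_of_lt (le_of_eq ?_) h3
  refine setLIntegral_congr_fun measurableSet_Ioo ?_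
  intro x hx
  dsimp only
  congr 1
  have hxa : 0 < b - x := sub_pos.2 hx.2
  rw [Real.rpow_neg hxa.le, Real.sqrt_eq_rpow, div_eq_mul_inv]

/-! ### The two radial factors. -/

def gR : ℝ → ℝ≥0∞ :=
  Set.indicator (Set.Iio 1) (fun t => ENNReal.ofReal (1 / (2 * Real.sqrt (1 - t))))

def gS : ℝ → ℝ≥0∞ :=
  Set.indicator {x : ℝ | 1 < x ∧ x ≤ 3} (fun t => ENNReal.ofReal (1 / Real.sqrt (t - 1)))

lemma gR_meas : Measurable gR := by
  refine Measurable.indicator ?_ measurableSet_Iio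
  fun_prop

lemma gS_meas : Measurable gS := by
  refine Measurable.indicator ?_ ?_
  · fun_prop
  · exact (measurableSet_lt measurable_const measurable_id).inter
      (measurableSet_le measurable_id measurable_const)

lemma gR_ne_top (x : ℝ) : gR x ≠ ∞ := by
  rw [gR]
  by_cases h : x ∈ Set.Iio 1
  · rw [Set.indicator_of_mem h]; exact ENNReal.ofReal_ne_top
  · rw [Set.indicator_of_notMem h]; exact ENNReal.zero_ne_top

lemma IR_lt_top : ∫⁻ (x : E3), gR ‖x‖ < ∞ := by
  rw [lintegral_norm_radial gR gR_meas]
  refine ENNReal.mul_lt_top (measure_lt_top _ _) ?_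
  have hb : ∫⁻ r in Set.Ioi (0:ℝ), ENNReal.ofReal (r ^ 2) * gR r ≤
      ∫⁻ r in Set.Ioi (0:ℝ),
        Set.indicator (Set.Ioo (0:ℝ) 1) (fun t => ENNReal.ofReal (1 / Real.sqrt (1 - t))) r := by
    refine setLIntegral_mono ((by fun_prop : Measurable fun t : ℝ =>
      ENNReal.ofReal (1 / Real.sqrt (1 - t))).indicator measurableSet_Ioo) ?_
    intro r hr
    rcases lt_or_ge r 1 with h1 | h1
    · rw [gR, Set.indicator_of_mem (show r ∈ Set.Iio 1 from h1)
          (fun t => ENNReal.ofReal (1 / (2 * Real.sqrt (1 - t)))),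
        Set.indicator_of_mem (show r ∈ Set.Ioo (0:ℝ) 1 from ⟨hr, h1⟩)
          (fun t => ENNReal.ofReal (1 / Real.sqrt (1 - t)))]
      have hr2 : ENNReal.ofReal (r ^ 2) ≤ 1 := by
        rw [show (1:ℝ≥0∞) = ENNReal.ofReal 1 by simp]
        exact ENNReal.ofReal_le_ofReal (by nlinarith [le_of_lt (Set.mem_Ioi.1 hr)])
      calc ENNReal.ofReal (r ^ 2) * ENNReal.ofReal (1 / (2 * Real.sqrt (1 - r)))
          ≤ 1 * ENNReal.ofReal (1 / Real.sqrt (1 - r)) := by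
            refine mul_le_mul' hr2 (ENNReal.ofReal_le_ofReal ?_)
            rcases eq_or_lt_of_le (Real.sqrt_nonneg (1 - r)) with h | h
            · rw [← h]; simp
            · rw [div_le_div_iff₀ (by linarith) h]; nlinarith
        _ = ENNReal.ofReal (1 / Real.sqrt (1 - r)) := one_mul _
    · rw [gR, Set.indicator_of_notMem (show r ∉ Set.Iio 1 by simpa using h1)
          (fun t => ENNReal.ofReal (1 / (2 * Real.sqrt (1 - t)))), mul_zero]
      exact zero_le
  refine lt_of_le_of_lt hb ?_
  rw [lintegral_indicator measurableSet_Ioo, Measure.restrict_restrict measurableSet_Ioo]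
  refine lt_of_le_of_lt (lintegral_mono_set (Set.inter_subset_left)) ?_
  have := aux_1d' 0 1 1 one_pos
  simpa using this

lemma IS_lt_top : ∫⁻ (x : E3), gS ‖x‖ < ∞ := by
  rw [lintegral_norm_radial gS gS_meas]
  refine ENNReal.mul_lt_top (measure_lt_top _ _) ?_
  have hb : ∫⁻ r in Set.Ioi (0:ℝ), ENNReal.ofReal (r ^ 2) * gS r ≤
      ∫⁻ r in Set.Ioi (0:ℝ),
        Set.indicator (Set.Ioc (1:ℝ) 3) (fun t => ENNReal.ofReal (9 / Real.sqrt (t - 1))) r := by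
    refine setLIntegral_mono ((by fun_prop : Measurable fun t : ℝ =>
      ENNReal.ofReal (9 / Real.sqrt (t - 1))).indicator measurableSet_Ioc) ?_
    intro r _
    rcases Classical.em (1 < r ∧ r ≤ 3) with h1 | h1
    · rw [gS, Set.indicator_of_mem (show r ∈ {x : ℝ | 1 < x ∧ x ≤ 3} from h1)
          (fun t => ENNReal.ofReal (1 / Real.sqrt (t - 1))),
        Set.indicator_of_mem (show r ∈ Set.Ioc (1:ℝ) 3 from ⟨h1.1, h1.2⟩)
          (fun t => ENNReal.ofReal (9 / Real.sqrt (t - 1)))]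
      have hr2 : ENNReal.ofReal (r ^ 2) ≤ ENNReal.ofReal 9 :=
        ENNReal.ofReal_le_ofReal (by nlinarith [h1.1, h1.2])
      calc ENNReal.ofReal (r ^ 2) * ENNReal.ofReal (1 / Real.sqrt (r - 1))
          ≤ ENNReal.ofReal 9 * ENNReal.ofReal (1 / Real.sqrt (r - 1)) :=
            mul_le_mul' hr2 le_rfl
        _ = ENNReal.ofReal (9 / Real.sqrt (r - 1)) := by
            rw [← ENNReal.ofReal_mul (by norm_num)]; ring_nf
    · rw [gS, Set.indicator_of_notMem (show r ∉ {x : ℝ | 1 < x ∧ x ≤ 3} from h1)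
          (fun t => ENNReal.ofReal (1 / Real.sqrt (t - 1))), mul_zero]
      exact zero_le
  refine lt_of_le_of_lt hb ?_
  rw [lintegral_indicator measurableSet_Ioc, Measure.restrict_restrict measurableSet_Ioc]
  refine lt_of_le_of_lt (lintegral_mono_set (Set.inter_subset_left)) ?_
  exact aux_1d 1 3 9 (by norm_num)

/-! ### The core pointwise inequality. -/

lemma core_ineq {u t v w κ : ℝ} (ht0 : 0 ≤ t) (hw0 : 0 ≤ w) (ht : t < 1) (hu : 1 < u)
    (hw : w < κ) (hv : κ < v) :
    1 / (u ^ 2 - t ^ 2 + v ^ 2 - w ^ 2) ≤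
      1 / (2 * Real.sqrt (1 - t)) * (1 / Real.sqrt (u - 1)) := by
  have ha : (0:ℝ) < u - 1 := by linarith
  have hb : (0:ℝ) < 1 - t := by linarith
  have hsa : 0 < Real.sqrt (u - 1) := Real.sqrt_pos.2 ha
  have hsb : 0 < Real.sqrt (1 - t) := Real.sqrt_pos.2 hb
  have hsaq := Real.sq_sqrt ha.le
  have hsbq := Real.sq_sqrt hb.le
  have hvw : 0 ≤ v ^ 2 - w ^ 2 := by nlinarith
  have key : 2 * Real.sqrt (1 - t) * Real.sqrt (u - 1) ≤ u ^ 2 - t ^ 2 + v ^ 2 - w ^ 2 := by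
    nlinarith [sq_nonneg (Real.sqrt (u - 1) - Real.sqrt (1 - t))]
  calc 1 / (u ^ 2 - t ^ 2 + v ^ 2 - w ^ 2)
      ≤ 1 / (2 * Real.sqrt (1 - t) * Real.sqrt (u - 1)) :=
        one_div_le_one_div_of_le (by positivity) key
    _ = 1 / (2 * Real.sqrt (1 - t)) * (1 / Real.sqrt (u - 1)) := by
        rw [div_mul_div_comm, one_mul]

/-! ### The dominating function and its integral. -/

def S1 : Set (E3 × E3) := {q | ‖q.2‖ < 1 ∧ 1 < ‖q.2 + q.1‖ ∧ ‖q.2 + q.1‖ ≤ 3}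

def G1 : E3 × E3 → ℝ≥0∞ := fun q =>
  ENNReal.ofReal (1 / (2 * Real.sqrt (1 - ‖q.2‖)) * (1 / Real.sqrt (‖q.2 + q.1‖ - 1)))

def Hfun : E3 × E3 → ℝ≥0∞ := S1.indicator G1

def Sset : Set (E3 × E3 × E3) :=
  {z | (‖z.2.1‖ < 1 ∧ 1 < ‖z.2.1 + z.1‖ ∧ ‖z.2.1 + z.1‖ ≤ 3) ∧ ‖z.2.2 - z.1‖ ≤ 3}

def Gfun : E3 × E3 × E3 → ℝ≥0∞ := fun z => G1 (z.1, z.2.1)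

def Ffun : E3 × E3 × E3 → ℝ≥0∞ := Sset.indicator Gfun

lemma S1_meas : MeasurableSet S1 := by
  have m1 : Measurable fun q : E3 × E3 => ‖q.2‖ := by fun_prop
  have m2 : Measurable fun q : E3 × E3 => ‖q.2 + q.1‖ := by fun_prop
  simp only [S1, Set.setOf_and]
  exact (measurableSet_lt m1 measurable_const).inter
    ((measurableSet_lt measurable_const m2).inter (measurableSet_le m2 measurable_const))

lemma G1_meas : Measurable G1 := by unfold G1; fun_prop

lemma Hfun_meas : Measurable Hfun := G1_meas.indicator S1_meas

lemma Sset_meas : MeasurableSet Sset := by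
  have m1 : Measurable fun z : E3 × E3 × E3 => ‖z.2.1‖ := by fun_prop
  have m2 : Measurable fun z : E3 × E3 × E3 => ‖z.2.1 + z.1‖ := by fun_prop
  have m3 : Measurable fun z : E3 × E3 × E3 => ‖z.2.2 - z.1‖ := by fun_prop
  simp only [Sset, Set.setOf_and]
  exact (((measurableSet_lt m1 measurable_const).inter
    ((measurableSet_lt measurable_const m2).inter
      (measurableSet_le m2 measurable_const)))).inter
    (measurableSet_le m3 measurable_const)

lemma Gfun_meas : Measurable Gfun := G1_meas.comp (by fun_prop)

lemma Ffun_meas : Measurable Ffun := Gfun_meas.indicator Sset_meas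

lemma stepB :
    ∫⁻ z, Ffun z = (∫⁻ q, Hfun q) * volume (closedBall (0 : E3) 3) := by
  have hinner : ∀ p r : E3, ∫⁻ r', Ffun (p, (r, r')) =
      Hfun (p, r) * volume (closedBall (0 : E3) 3) := by
    intro p r
    by_cases hq : (p, r) ∈ S1
    · have heq : (fun r' : E3 => Ffun (p, (r, r'))) =
          fun r' => (closedBall p 3).indicator (fun _ => G1 (p, r)) r' := by
        funext r'
        by_cases hr' : r' ∈ closedBall p 3
        · rw [Set.indicator_of_mem hr']
          have hmem : (p, (r, r')) ∈ Sset := by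
            refine ⟨hq, ?_⟩
            simpa [dist_eq_norm] using (mem_closedBall.1 hr')
          rw [Ffun, Set.indicator_of_mem hmem]
          rfl
        · rw [Set.indicator_of_notMem hr']
          have hmem : (p, (r, r')) ∉ Sset := by
            intro hc
            exact hr' (mem_closedBall.2 (by simpa [dist_eq_norm] using hc.2))
          rw [Ffun, Set.indicator_of_notMem hmem]
      rw [heq, lintegral_indicator_const measurableSet_closedBall,
        Hfun, Set.indicator_of_mem hq, Measure.addHaar_closedBall_center]
    · have heq : (fun r' : E3 => Ffun (p, (r, r'))) = fun _ => 0 := by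
        funext r'
        have hmem : (p, (r, r')) ∉ Sset := fun hc => hq hc.1
        rw [Ffun, Set.indicator_of_notMem hmem]
      rw [heq, Hfun, Set.indicator_of_notMem hq, lintegral_const, zero_mul, zero_mul]
  have hc_ne : volume (closedBall (0 : E3) 3) ≠ ∞ := measure_closedBall_lt_top.ne
  calc ∫⁻ z, Ffun z
      = ∫⁻ p, ∫⁻ y, Ffun (p, y) := by
        rw [Measure.volume_eq_prod]; exact lintegral_prod Ffun Ffun_meas.aemeasurable
    _ = ∫⁻ p, ∫⁻ r, ∫⁻ r', Ffun (p, (r, r')) := by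
        congr 1; funext p
        rw [Measure.volume_eq_prod]
        exact lintegral_prod (fun y => Ffun (p, y))
          (Ffun_meas.comp measurable_prodMk_left).aemeasurable
    _ = ∫⁻ p, ∫⁻ r, Hfun (p, r) * volume (closedBall (0 : E3) 3) := by
        congr 1; funext p; congr 1; funext r; exact hinner p r
    _ = ∫⁻ p, (∫⁻ r, Hfun (p, r)) * volume (closedBall (0 : E3) 3) := by
        congr 1; funext p
        exact lintegral_mul_const' _ _ hc_ne
    _ = (∫⁻ p, ∫⁻ r, Hfun (p, r)) * volume (closedBall (0 : E3) 3) :=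
        lintegral_mul_const' _ _ hc_ne
    _ = (∫⁻ q, Hfun q) * volume (closedBall (0 : E3) 3) := by
        congr 1
        rw [Measure.volume_eq_prod]
        exact (lintegral_prod Hfun Hfun_meas.aemeasurable).symm

lemma stepC :
    ∫⁻ q, Hfun q = (∫⁻ (x : E3), gR ‖x‖) * ∫⁻ (x : E3), gS ‖x‖ := by
  have hpr : ∀ r p : E3, Hfun (p, r) = gR ‖r‖ * gS ‖r + p‖ := by
    intro r p
    by_cases h1 : ‖r‖ < 1
    · by_cases h2 : 1 < ‖r + p‖ ∧ ‖r + p‖ ≤ 3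
      · rw [Hfun, Set.indicator_of_mem (show (p, r) ∈ S1 from ⟨h1, h2.1, h2.2⟩),
          gR, Set.indicator_of_mem (show ‖r‖ ∈ Set.Iio (1:ℝ) from h1),
          gS, Set.indicator_of_mem (show ‖r + p‖ ∈ {x : ℝ | 1 < x ∧ x ≤ 3} from h2)]
        exact ENNReal.ofReal_mul (by positivity)
      · rw [Hfun, Set.indicator_of_notMem (show (p, r) ∉ S1 from fun hc => h2 ⟨hc.2.1, hc.2.2⟩),
          gS, Set.indicator_of_notMem (show ‖r + p‖ ∉ {x : ℝ | 1 < x ∧ x ≤ 3} from h2), mul_zero]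
    · rw [Hfun, Set.indicator_of_notMem (show (p, r) ∉ S1 from fun hc => h1 hc.1),
        gR, Set.indicator_of_notMem (show ‖r‖ ∉ Set.Iio (1:ℝ) from h1), zero_mul]
  calc ∫⁻ q, Hfun q
      = ∫⁻ r, ∫⁻ p, Hfun (p, r) := by
        rw [Measure.volume_eq_prod]; exact lintegral_prod_symm Hfun Hfun_meas.aemeasurable
    _ = ∫⁻ r, gR ‖r‖ * ∫⁻ p, gS ‖r + p‖ := by
        congr 1; funext r
        rw [show (fun p => Hfun (p, r)) = fun p => gR ‖r‖ * gS ‖r + p‖ from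
          funext fun p => hpr r p]
        exact lintegral_const_mul' _ _ (gR_ne_top _)
    _ = ∫⁻ r, gR ‖r‖ * ∫⁻ (x : E3), gS ‖x‖ := by
        congr 1; funext r; congr 1
        exact lintegral_add_left_eq_self (fun x : E3 => gS ‖x‖) r
    _ = (∫⁻ (x : E3), gR ‖x‖) * ∫⁻ (x : E3), gS ‖x‖ :=
        lintegral_mul_const' _ _ IS_lt_top.ne

lemma HYdomain_meas (κ : ℝ) : MeasurableSet (HYdomain κ) := by
  have m1 : Measurable fun z : E3 × E3 × E3 => ‖z.2.1‖ := by fun_prop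
  have m2 : Measurable fun z : E3 × E3 × E3 => ‖z.2.1 + z.1‖ := by fun_prop
  have m3 : Measurable fun z : E3 × E3 × E3 => ‖z.2.2 - z.1‖ := by fun_prop
  have m4 : Measurable fun z : E3 × E3 × E3 => ‖z.2.2‖ := by fun_prop
  simp only [HYdomain, Set.setOf_and]
  exact (measurableSet_lt m1 measurable_const).inter
    ((measurableSet_lt measurable_const m2).inter
    ((measurableSet_le m2 measurable_const).inter
    ((measurableSet_lt m4 measurable_const).inter
    ((measurableSet_lt measurable_const m3).inter
    (measurableSet_le m3 measurable_const)))))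

lemma stepA {κ : ℝ} (hκ : κ ∈ Set.Ioc (0 : ℝ) 1) :
    (∫⁻ z in HYdomain κ,
        ENNReal.ofReal
          (1 / (‖z.2.1 + z.1‖ ^ 2 - ‖z.2.1‖ ^ 2 + ‖z.2.2 - z.1‖ ^ 2 - ‖z.2.2‖ ^ 2)))
      ≤ ∫⁻ z, Ffun z := by
  rw [← lintegral_indicator (HYdomain_meas κ)]
  refine lintegral_mono fun z => ?_
  by_cases hz : z ∈ HYdomain κ
  · rw [Set.indicator_of_mem hz]
    obtain ⟨h1, h2, h3, h4, h5, h6⟩ := hz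
    have hzS : z ∈ Sset := ⟨⟨h1, h2, h3⟩, le_trans h6 (by nlinarith [hκ.2])⟩
    rw [Ffun, Set.indicator_of_mem hzS]
    exact ENNReal.ofReal_le_ofReal
      (core_ineq (norm_nonneg _) (norm_nonneg _) h1 h2 h4 h5)
  · rw [Set.indicator_of_notMem hz]
    exact zero_le

end HYaux

theorem huang_yang_momentum_integral_bound :
    ∃ C : ℝ, 0 < C ∧
      ∀ κ : ℝ, κ ∈ Set.Ioc (0 : ℝ) 1 →
        (∫⁻ z in HYdomain κ,
            ENNReal.ofReal
              (1 / (‖z.2.1 + z.1‖ ^ 2 - ‖z.2.1‖ ^ 2 + ‖z.2.2 - z.1‖ ^ 2 - ‖z.2.2‖ ^ 2)))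
          ≤ ENNReal.ofReal C := by
  classical
  have hT : (∫⁻ z, HYaux.Ffun z) ≠ ⊤ := by
    rw [HYaux.stepB, HYaux.stepC]
    exact ENNReal.mul_ne_top
      (ENNReal.mul_ne_top HYaux.IR_lt_top.ne HYaux.IS_lt_top.ne)
      measure_closedBall_lt_top.ne
  refine ⟨(∫⁻ z, HYaux.Ffun z).toReal + 1, by positivity, fun κ hκ => ?_⟩
  calc (∫⁻ z in HYdomain κ,
          ENNReal.ofReal
            (1 / (‖z.2.1 + z.1‖ ^ 2 - ‖z.2.1‖ ^ 2 + ‖z.2.2 - z.1‖ ^ 2 - ‖z.2.2‖ ^ 2)))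
      ≤ ∫⁻ z, HYaux.Ffun z := HYaux.stepA hκ
    _ ≤ ENNReal.ofReal ((∫⁻ z, HYaux.Ffun z).toReal + 1) := by
        rw [← ENNReal.ofReal_toReal hT]
        exact ENNReal.ofReal_le_ofReal (by
          rw [ENNReal.toReal_ofReal (by positivity)]
          linarith)
end
end
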